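/- Assume n ≥ 1. For every ONE-IN-THREE 3SAT instance φ, the following are equivalent: (a) for every (x₀, x) ∈ ℝ × (Fin n → ℝ) with x₀^2 + Σ_{j ∈ Fin n} (x j)^2 = 1, the quantity q_φ(x₀, x) := max over i ∈ Fin k and j ∈ Fin n of the numbers -c_i(x₀,x)^2, c_i(x₀,x)^2, x₀^2 - (x j)^2, (x j)^2 - x₀^2 is strictly positive; (b) φ is not satisfiable. -/

import Mathlib

open Finset Filter

/-- Sign of a literal: `1` if positive, `-1` if negated. -/
noncomputable def Eps (c : Bool) : ℝ := if c then 1 else -1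

/-- A ONE-IN-THREE 3SAT instance, encoded by a variable-index map `v` and a sign map `b`,
is satisfiable if some Boolean assignment makes exactly one literal true in each clause. -/
def OneInThreeSat {n k : ℕ} (v : Fin k → Fin 3 → Fin n) (b : Fin k → Fin 3 → Bool) : Prop :=
  ∃ a : Fin n → Bool, ∀ i : Fin k, ∃! t : Fin 3, a (v i t) = b i t

/-- The quartic polynomial `s_φ` associated with a ONE-IN-THREE 3SAT instance. -/
noncomputable def sPhi {n k : ℕ} (v : Fin k → Fin 3 → Fin n) (b : Fin k → Fin 3 → Bool)
    (x : Fin n → ℝ) : ℝ :=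
  (∑ i : Fin k,
    (Eps (b i 0) * x (v i 0) + Eps (b i 1) * x (v i 1) + Eps (b i 2) * x (v i 2) + 1) ^ 2)
  + ∑ j : Fin n, (1 - x j ^ 2) ^ 2

/-- The clause polynomial `c_i(x₀, x)` used in the homogenized constraints. -/
noncomputable def cClause {n k : ℕ} (v : Fin k → Fin 3 → Fin n) (b : Fin k → Fin 3 → Bool)
    (x₀ : ℝ) (x : Fin n → ℝ) (i : Fin k) : ℝ :=
  Eps (b i 0) * x (v i 0) + Eps (b i 1) * x (v i 1) + Eps (b i 2) * x (v i 2) + x₀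

/-- `q_φ(x₀, x)`: the maximum over `i ∈ Fin k`, `j ∈ Fin (n+1)` of the numbers
`-c_i(x₀,x)²`, `c_i(x₀,x)²`, `x₀² - x_j²`, `x_j² - x₀²`. -/
noncomputable def qPhi {n k : ℕ} (v : Fin k → Fin 3 → Fin (n + 1))
    (b : Fin k → Fin 3 → Bool) (x₀ : ℝ) (x : Fin (n + 1) → ℝ) : ℝ :=
  Finset.univ.sup' ⟨Sum.inr ((0 : Fin (n + 1)), true), Finset.mem_univ _⟩
    (Sum.elim
      (fun p : Fin k × Bool =>
        if p.2 then (cClause v b x₀ x p.1) ^ 2 else -((cClause v b x₀ x p.1) ^ 2))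
      (fun p : Fin (n + 1) × Bool =>
        if p.2 then x₀ ^ 2 - x p.1 ^ 2 else x p.1 ^ 2 - x₀ ^ 2))

lemma eps_sq (c : Bool) : Eps c ^ 2 = 1 := by cases c <;> simp [Eps]

lemma eps_mul (c d : Bool) : Eps c * Eps d = Eps (c == d) := by
  cases c <;> cases d <;> simp [Eps]

lemma exu_iff (e : Fin 3 → Bool) :
    (∃! t : Fin 3, e t = true) ↔
      ((e 0 && !e 1 && !e 2) || (!e 0 && e 1 && !e 2) || (!e 0 && !e 1 && e 2)) = true := by
  have h : ∀ e : Fin 3 → Bool, ((∃ t, e t = true ∧ ∀ y, e y = true → y = t) ↔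
      ((e 0 && !e 1 && !e 2) || (!e 0 && e 1 && !e 2) || (!e 0 && !e 1 && e 2)) = true) := by
    decide
  exact h e

lemma eps_sum (e0 e1 e2 : Bool) :
    Eps e0 + Eps e1 + Eps e2 = -1 ↔
      ((e0 && !e1 && !e2) || (!e0 && e1 && !e2) || (!e0 && !e1 && e2)) = true := by
  cases e0 <;> cases e1 <;> cases e2 <;> norm_num [Eps]

lemma sq_le_qPhi {n k : ℕ} (v : Fin k → Fin 3 → Fin (n + 1)) (b : Fin k → Fin 3 → Bool)
    (x₀ : ℝ) (x : Fin (n + 1) → ℝ) (i : Fin k) :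
    (cClause v b x₀ x i) ^ 2 ≤ qPhi v b x₀ x := by
  have := Finset.le_sup' (f := Sum.elim
      (fun p : Fin k × Bool =>
        if p.2 then (cClause v b x₀ x p.1) ^ 2 else -((cClause v b x₀ x p.1) ^ 2))
      (fun p : Fin (n + 1) × Bool =>
        if p.2 then x₀ ^ 2 - x p.1 ^ 2 else x p.1 ^ 2 - x₀ ^ 2))
    (Finset.mem_univ (Sum.inl (i, true)))
  simpa [qPhi] using this

lemma sub_le_qPhi {n k : ℕ} (v : Fin k → Fin 3 → Fin (n + 1)) (b : Fin k → Fin 3 → Bool)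
    (x₀ : ℝ) (x : Fin (n + 1) → ℝ) (j : Fin (n + 1)) (c : Bool) :
    (if c then x₀ ^ 2 - x j ^ 2 else x j ^ 2 - x₀ ^ 2) ≤ qPhi v b x₀ x := by
  have := Finset.le_sup' (f := Sum.elim
      (fun p : Fin k × Bool =>
        if p.2 then (cClause v b x₀ x p.1) ^ 2 else -((cClause v b x₀ x p.1) ^ 2))
      (fun p : Fin (n + 1) × Bool =>
        if p.2 then x₀ ^ 2 - x p.1 ^ 2 else x p.1 ^ 2 - x₀ ^ 2))
    (Finset.mem_univ (Sum.inr (j, c)))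
  simpa [qPhi] using this

theorem qPhi_positive_on_sphere_iff_not_satisfiable {n k : ℕ}
    (v : Fin k → Fin 3 → Fin (n + 1)) (b : Fin k → Fin 3 → Bool) :
    (∀ (x₀ : ℝ) (x : Fin (n + 1) → ℝ), x₀ ^ 2 + ∑ j : Fin (n + 1), x j ^ 2 = 1 →
      0 < qPhi v b x₀ x) ↔ ¬ OneInThreeSat v b := by
  constructor
  · intro hpos hsat
    obtain ⟨a, ha⟩ := hsat
    set x₀ : ℝ := Real.sqrt (1 / (n + 2)) with hx₀def
    have hx₀sq : x₀ ^ 2 = 1 / (n + 2) := Real.sq_sqrt (by positivity)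
    set x : Fin (n + 1) → ℝ := fun j => Eps (a j) * x₀ with hxdef
    have hxsq : ∀ j, x j ^ 2 = x₀ ^ 2 := by
      intro j; simp [hxdef, mul_pow, eps_sq]
    have hsphere : x₀ ^ 2 + ∑ j, x j ^ 2 = 1 := by
      rw [Finset.sum_congr rfl (fun j _ => hxsq j), Finset.sum_const, Finset.card_univ,
        Fintype.card_fin, nsmul_eq_mul, hx₀sq]
      have hne : (n : ℝ) + 2 ≠ 0 := by positivity
      field_simp
      push_cast
      ring
    have hc : ∀ i, cClause v b x₀ x i = 0 := by
      intro i
      have h1 := (exu_iff (fun t => b i t == a (v i t))).1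
        ((existsUnique_congr (fun t => by rw [beq_iff_eq]; exact eq_comm)).1 (ha i))
      have h2 : Eps (b i 0 == a (v i 0)) + Eps (b i 1 == a (v i 1)) + Eps (b i 2 == a (v i 2))
          = -1 := (eps_sum _ _ _).2 h1
      have h3 : cClause v b x₀ x i =
          (Eps (b i 0 == a (v i 0)) + Eps (b i 1 == a (v i 1)) + Eps (b i 2 == a (v i 2)) + 1)
            * x₀ := by
        simp only [cClause, hxdef, ← eps_mul]
        ring
      rw [h3, h2]; ring
    have h0 : qPhi v b x₀ x ≤ 0 := by
      apply Finset.sup'_le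
      rintro (⟨i, c⟩ | ⟨j, c⟩) -
      · cases c <;> simp [hc i]
      · cases c <;> simp [hxsq j]
    exact absurd (hpos x₀ x hsphere) (not_lt.2 h0)
  · intro hns x₀ x hsphere
    by_contra hq
    push_neg at hq
    have hc0 : ∀ i, cClause v b x₀ x i = 0 := by
      intro i
      have h1 := le_trans (sq_le_qPhi v b x₀ x i) hq
      nlinarith [sq_nonneg (cClause v b x₀ x i)]
    have hxsq : ∀ j, x j ^ 2 = x₀ ^ 2 := by
      intro j
      have h1 := le_trans (sub_le_qPhi v b x₀ x j true) hq
      have h2 := le_trans (sub_le_qPhi v b x₀ x j false) hq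
      simp at h1 h2
      linarith
    have hx₀ : x₀ ≠ 0 := by
      intro h
      rw [Finset.sum_congr rfl (fun j _ => hxsq j), Finset.sum_const, Finset.card_univ,
        Fintype.card_fin, nsmul_eq_mul, h] at hsphere
      simp at hsphere
    classical
    apply hns
    refine ⟨fun j => decide (x j = x₀), fun i => ?_⟩
    set a : Fin (n + 1) → Bool := fun j => decide (x j = x₀) with hadef
    have hsign : ∀ j, x j = Eps (a j) * x₀ := by
      intro j
      by_cases h : x j = x₀
      · simp [hadef, h, Eps]
      · have hfac : (x j - x₀) * (x j + x₀) = 0 := by nlinarith [hxsq j]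
        rcases mul_eq_zero.1 hfac with h' | h'
        · exact absurd (by linarith) h
        · simp [hadef, h, Eps]; linarith
    have h3 : cClause v b x₀ x i =
        (Eps (b i 0 == a (v i 0)) + Eps (b i 1 == a (v i 1)) + Eps (b i 2 == a (v i 2)) + 1)
          * x₀ := by
      simp only [cClause, hsign, ← eps_mul]
      ring
    have h4 : Eps (b i 0 == a (v i 0)) + Eps (b i 1 == a (v i 1)) + Eps (b i 2 == a (v i 2))
        = -1 := by
      have := hc0 i
      rw [h3] at this
      rcases mul_eq_zero.1 this with h' | h'
      · linarith
      · exact absurd h' hx₀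
    have h5 := (eps_sum _ _ _).1 h4
    have h6 := (exu_iff (fun t => b i t == a (v i t))).2 h5
    exact (existsUnique_congr (fun t => by rw [beq_iff_eq]; exact eq_comm)).1 h6
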